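/- Two points p, q of the projective line over a ring R are radically parallel if and only if their images under the canonical map P(R) → P(R/rad R) coincide. -/
import Mathlib


open Matrix

/-- A pair `(a, b)` is admissible if it is the first row of an invertible 2×2 matrix. -/
def Admissible {R : Type*} [Ring R] (a b : R) : Prop :=
  ∃ M : Matrix (Fin 2) (Fin 2) R, IsUnit M ∧ M 0 0 = a ∧ M 0 1 = b

/-- The point `R(a,b)` of the projective line over `R`. -/
def pt (R : Type*) [Ring R] (a b : R) : Submodule R (Fin 2 → R) :=
  Submodule.span R {![a, b]}

/-- The projective line over `R`. -/
def ProjLine (R : Type*) [Ring R] : Set (Submodule R (Fin 2 → R)) :=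
  {p | ∃ a b : R, Admissible a b ∧ p = pt R a b}

/-- Two points are distant iff representing admissible pairs form an invertible matrix. -/
def Distant {R : Type*} [Ring R] (p q : Submodule R (Fin 2 → R)) : Prop :=
  ∃ a b c d : R, p = pt R a b ∧ q = pt R c d ∧ IsUnit (!![a, b; c, d])

/-- `p` is radically parallel to `q`: every point distant to `p` is distant to `q`. -/
def RadParallel {R : Type*} [Ring R] (p q : Submodule R (Fin 2 → R)) : Prop :=
  ∀ x ∈ ProjLine R, Distant x p → Distant x q

/-- The factor ring `R/rad R` (the Jacobson radical realized as a two-sided ideal). -/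
abbrev RadQuot (R : Type*) [Ring R] :=
  (TwoSidedIdeal.jacobson (⊥ : TwoSidedIdeal R)).ringCon.Quotient

/-- The canonical epimorphism `R → R/rad R`, `a ↦ ā`. -/
def radQuotMk (R : Type*) [Ring R] : R →+* RadQuot R :=
  (TwoSidedIdeal.jacobson (⊥ : TwoSidedIdeal R)).ringCon.mk'

/-! ### Auxiliary lemmas -/

section MonoidHelpers
variable {S : Type*} [Monoid S]

lemma myIsUnit_of_two_sided {A B C : S} (h1 : A * B = 1) (h2 : C * A = 1) : IsUnit A := by
  have hBC : C = B := by
    calc C = C * (A * B) := by rw [h1, mul_one]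
    _ = (C * A) * B := by rw [mul_assoc]
    _ = B := by rw [h2, one_mul]
  exact ⟨⟨A, B, h1, by rw [← hBC]; exact h2⟩, rfl⟩

lemma myIsUnit_mul_left {u : S} (hu : IsUnit u) (a : S) : IsUnit (u * a) ↔ IsUnit a := by
  obtain ⟨v, rfl⟩ := hu; exact Units.isUnit_units_mul v a

lemma myIsUnit_mul_right {u : S} (hu : IsUnit u) (a : S) : IsUnit (a * u) ↔ IsUnit a := by
  obtain ⟨v, rfl⟩ := hu; exact Units.isUnit_mul_units a v

end MonoidHelpers

section MatrixHelpers
variable {S : Type*} [Ring S]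

lemma matUnit_of_inv {A B : Matrix (Fin 2) (Fin 2) S} (h1 : A * B = 1) (h2 : B * A = 1) :
    IsUnit A := ⟨⟨A, B, h1, h2⟩, rfl⟩

/-- upper triangular with unit diagonal is a unit -/
lemma isUnit_upper {u w : S} (hu : IsUnit u) (hw : IsUnit w) (v : S) :
    IsUnit !![u, v; 0, w] := by
  obtain ⟨u, rfl⟩ := hu; obtain ⟨w, rfl⟩ := hw
  refine matUnit_of_inv (B := !![(↑u⁻¹ : S), -(↑u⁻¹ * v * ↑w⁻¹); 0, ↑w⁻¹]) ?_ ?_ <;>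
  · rw [Matrix.mul_fin_two, Matrix.one_fin_two]
    congr 1 <;> simp [mul_assoc]

lemma isUnit_lower {u w : S} (hu : IsUnit u) (hw : IsUnit w) (v : S) :
    IsUnit !![u, 0; v, w] := by
  obtain ⟨u, rfl⟩ := hu; obtain ⟨w, rfl⟩ := hw
  refine matUnit_of_inv (B := !![(↑u⁻¹ : S), 0; -(↑w⁻¹ * v * ↑u⁻¹), ↑w⁻¹]) ?_ ?_ <;>
  · rw [Matrix.mul_fin_two, Matrix.one_fin_two]
    congr 1 <;> simp [mul_assoc]

lemma isUnit_swap : IsUnit (!![0, 1; 1, 0] : Matrix (Fin 2) (Fin 2) S) := by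
  refine matUnit_of_inv (B := !![0, 1; 1, 0]) ?_ ?_ <;>
  · rw [Matrix.mul_fin_two, Matrix.one_fin_two]; congr 1 <;> simp

/-- if `!![1,v;0,w]` is a unit then `w` is a unit -/
lemma isUnit_of_isUnit_upper_one {v w : S} (h : IsUnit !![(1 : S), v; 0, w]) : IsUnit w := by
  obtain ⟨u, hu⟩ := h
  have h1 : !![(1 : S), v; 0, w] * (Units.val u⁻¹) = 1 := by rw [← hu]; exact u.mul_inv
  have h2 : (Units.val u⁻¹) * !![(1 : S), v; 0, w] = 1 := by
    rw [← hu]; exact u.inv_mul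
  set B : Matrix (Fin 2) (Fin 2) S := Units.val u⁻¹ with hB
  rw [Matrix.eta_fin_two B, Matrix.mul_fin_two] at h1 h2
  have e10 : B 1 0 * 1 + B 1 1 * 0 = 0 := by
    have := congrFun (congrFun h2 1) 0; simpa [Matrix.one_fin_two] using this
  have e11 : B 1 0 * v + B 1 1 * w = 1 := by
    have := congrFun (congrFun h2 1) 1; simpa [Matrix.one_fin_two] using this
  have f11 : 0 * B 0 1 + w * B 1 1 = 1 := by
    have := congrFun (congrFun h1 1) 1; simpa [Matrix.one_fin_two] using this
  have hB10 : B 1 0 = 0 := by simpa using e10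
  refine myIsUnit_of_two_sided (B := B 1 1) (C := B 1 1) ?_ ?_
  · simpa using f11
  · rw [hB10] at e11; simpa using e11

/-- if `!![u,v;0,1]` is a unit then `u` is a unit -/
lemma isUnit_of_isUnit_lower_one {u v : S} (h : IsUnit !![u, v; (0 : S), 1]) : IsUnit u := by
  obtain ⟨w, hw⟩ := h
  have h1 : !![u, v; (0 : S), 1] * (Units.val w⁻¹) = 1 := by rw [← hw]; exact w.mul_inv
  have h2 : (Units.val w⁻¹) * !![u, v; (0 : S), 1] = 1 := by
    rw [← hw]; exact w.inv_mul
  set B : Matrix (Fin 2) (Fin 2) S := Units.val w⁻¹ with hB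
  rw [Matrix.eta_fin_two B, Matrix.mul_fin_two] at h1 h2
  have e00 : B 0 0 * u + B 0 1 * 0 = 1 := by
    have := congrFun (congrFun h2 0) 0; simpa [Matrix.one_fin_two] using this
  have f10 : 0 * B 0 0 + 1 * B 1 0 = 0 := by
    have := congrFun (congrFun h1 1) 0; simpa [Matrix.one_fin_two] using this
  have f00 : u * B 0 0 + v * B 1 0 = 1 := by
    have := congrFun (congrFun h1 0) 0; simpa [Matrix.one_fin_two] using this
  have hB10 : B 1 0 = 0 := by simpa using f10
  refine myIsUnit_of_two_sided (B := B 0 0) (C := B 0 0) ?_ ?_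
  · rw [hB10] at f00; simpa using f00
  · simpa using e00

lemma mapMatrix_fin_two {T : Type*} [Ring T] (φ : S →+* T) (a b c d : S) :
    φ.mapMatrix !![a, b; c, d] = !![φ a, φ b; φ c, φ d] := by
  ext i j
  fin_cases i <;> fin_cases j <;> simp [RingHom.mapMatrix_apply]

end MatrixHelpers

section JacHelpers
variable {R : Type*} [Ring R]

local notation "J" => TwoSidedIdeal.jacobson (⊥ : TwoSidedIdeal R)

lemma radQuotMk_surjective : Function.Surjective (radQuotMk R) :=
  fun x => Quotient.mk''_surjective x

lemma radQuotMk_eq_zero {x : R} : radQuotMk R x = 0 ↔ x ∈ J := by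
  have h0 : (0 : RadQuot R) = radQuotMk R 0 := (map_zero _).symm
  rw [h0]
  exact (TwoSidedIdeal.jacobson (⊥ : TwoSidedIdeal R)).ringCon.eq

/-- `x ∈ rad R` implies `1 + y*x` is a unit for every `y`. -/
lemma isUnit_one_add_of_mem_jac {x : R} (hx : x ∈ J) (y : R) : IsUnit (1 + y * x) := by
  have key : ∀ y : R, ∃ z : R, z * (1 + y * x) = 1 := by
    intro y
    obtain ⟨z, hz⟩ := TwoSidedIdeal.mem_jacobson_iff.mp hx y
    rw [TwoSidedIdeal.mem_bot, sub_eq_zero] at hz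
    refine ⟨z, ?_⟩
    rw [mul_add, mul_one, ← mul_assoc, add_comm]
    exact hz
  obtain ⟨z, hz⟩ := key y
  have h1 : z + z * (y * x) = 1 := by rw [mul_add, mul_one] at hz; exact hz
  have hz' : z = 1 + -(z * y) * x := by
    rw [neg_mul, mul_assoc, ← sub_eq_add_neg]
    exact eq_sub_of_add_eq h1
  obtain ⟨w, hw⟩ := key (-(z * y))
  rw [← hz'] at hw
  have hwz : (1 + y * x) = w := by
    calc (1 + y * x) = (w * z) * (1 + y * x) := by rw [hw, one_mul]
    _ = w * (z * (1 + y * x)) := by rw [mul_assoc]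
    _ = w := by rw [hz, mul_one]
  exact myIsUnit_of_two_sided (B := z) (C := z) (by rw [hwz]; exact hw) hz

lemma mem_jac_of_forall_isUnit {x : R} (h : ∀ y : R, IsUnit (1 + y * x)) : x ∈ J := by
  rw [TwoSidedIdeal.mem_jacobson_iff]
  intro y
  refine ⟨Units.val (h y).unit⁻¹, ?_⟩
  rw [TwoSidedIdeal.mem_bot, sub_eq_zero]
  have hv := (h y).val_inv_mul
  calc Units.val (h y).unit⁻¹ * y * x + Units.val (h y).unit⁻¹
      = Units.val (h y).unit⁻¹ * (1 + y * x) := by rw [mul_add, mul_one, ← mul_assoc, add_comm]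
  _ = 1 := hv

/-- Units lift along the canonical map mod the radical. -/
lemma isUnit_of_radQuotMk {x : R} (h : IsUnit (radQuotMk R x)) : IsUnit x := by
  obtain ⟨b, hb1, hb2⟩ := isUnit_iff_exists.mp h
  obtain ⟨y, rfl⟩ := radQuotMk_surjective (R := R) b
  have m1 : x * y - 1 ∈ J := by
    rw [← radQuotMk_eq_zero, map_sub, _root_.map_mul, _root_.map_one, sub_eq_zero]
    exact hb1
  have m2 : y * x - 1 ∈ J := by
    rw [← radQuotMk_eq_zero, map_sub, _root_.map_mul, _root_.map_one, sub_eq_zero]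
    exact hb2
  have hxy : IsUnit (x * y) := by
    have := isUnit_one_add_of_mem_jac m1 1
    rwa [one_mul, add_sub_cancel] at this
  have hyx : IsUnit (y * x) := by
    have := isUnit_one_add_of_mem_jac m2 1
    rwa [one_mul, add_sub_cancel] at this
  refine myIsUnit_of_two_sided (B := y * (Units.val hxy.unit⁻¹))
    (C := (Units.val hyx.unit⁻¹) * y) ?_ ?_
  · rw [← mul_assoc]
    exact hxy.mul_val_inv
  · rw [mul_assoc]
    exact hyx.val_inv_mul

/-- A 2×2 matrix congruent to `1` mod the radical is a unit. -/
lemma isUnit_matrix_perturb {e f g h : R} (he : e ∈ J) (hf : f ∈ J) (hg : g ∈ J) (hh : h ∈ J) :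
    IsUnit !![1 + e, f; g, 1 + h] := by
  have hu : IsUnit (1 + e) := by simpa using isUnit_one_add_of_mem_jac he 1
  set z : R := Units.val hu.unit⁻¹ with hzdef
  have hz1 : z * (1 + e) = 1 := hu.val_inv_mul
  have hj : h - g * (z * f) ∈ J :=
    TwoSidedIdeal.sub_mem _ hh
      (TwoSidedIdeal.mul_mem_left _ _ _ (TwoSidedIdeal.mul_mem_left _ _ _ hf))
  have hw : IsUnit (1 + (h - g * (z * f))) := by
    simpa using isUnit_one_add_of_mem_jac hj 1
  have hL : IsUnit !![(1 : R), 0; -(g * z), 1] := isUnit_lower isUnit_one isUnit_one _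
  have key : !![(1 : R), 0; -(g * z), 1] * !![1 + e, f; g, 1 + h]
      = !![1 + e, f; 0, 1 + (h - g * (z * f))] := by
    have c10 : -(g * z) * (1 + e) + 1 * g = 0 := by
      rw [neg_mul, mul_assoc, hz1, mul_one, one_mul, neg_add_cancel]
    have c11 : -(g * z) * f + 1 * (1 + h) = 1 + (h - g * (z * f)) := by
      rw [neg_mul, one_mul, mul_assoc]; abel
    rw [Matrix.mul_fin_two, c10, c11]
    simp
  have : IsUnit (!![(1 : R), 0; -(g * z), 1] * !![1 + e, f; g, 1 + h]) := by
    rw [key]; exact isUnit_upper hu hw f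
  exact (myIsUnit_mul_left hL _).mp this

/-- Invertibility of 2×2 matrices lifts along the canonical map mod the radical. -/
lemma isUnit_matrix_of_map {A : Matrix (Fin 2) (Fin 2) R}
    (hA : IsUnit ((radQuotMk R).mapMatrix A)) : IsUnit A := by
  obtain ⟨Bq, hB1, hB2⟩ := isUnit_iff_exists.mp hA
  choose Bf hBf using fun p : Fin 2 × Fin 2 => radQuotMk_surjective (R := R) (Bq p.1 p.2)
  set B : Matrix (Fin 2) (Fin 2) R := Matrix.of fun i j => Bf (i, j) with hBdef
  have hmapB : (radQuotMk R).mapMatrix B = Bq := by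
    ext i j
    simp only [RingHom.mapMatrix_apply, Matrix.map_apply, hBdef, Matrix.of_apply]
    exact hBf (i, j)
  have key : ∀ C : Matrix (Fin 2) (Fin 2) R, (radQuotMk R).mapMatrix C = 1 → IsUnit C := by
    intro C hC
    have entry : ∀ i j, radQuotMk R (C i j) = (1 : Matrix (Fin 2) (Fin 2) (RadQuot R)) i j := by
      intro i j
      rw [← hC]
      simp [RingHom.mapMatrix_apply, Matrix.map_apply]
    have m00 : C 0 0 - 1 ∈ J := by
      rw [← radQuotMk_eq_zero, map_sub, _root_.map_one, sub_eq_zero]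
      rw [entry 0 0, Matrix.one_apply_eq]
    have m11 : C 1 1 - 1 ∈ J := by
      rw [← radQuotMk_eq_zero, map_sub, _root_.map_one, sub_eq_zero]
      rw [entry 1 1, Matrix.one_apply_eq]
    have m01 : C 0 1 ∈ J := by
      rw [← radQuotMk_eq_zero, entry 0 1]
      simp [Matrix.one_apply]
    have m10 : C 1 0 ∈ J := by
      rw [← radQuotMk_eq_zero, entry 1 0]
      simp [Matrix.one_apply]
    have : C = !![1 + (C 0 0 - 1), C 0 1; C 1 0, 1 + (C 1 1 - 1)] := by
      rw [Matrix.eta_fin_two C]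
      congr 1 <;> simp
    rw [this]
    exact isUnit_matrix_perturb m00 m01 m10 m11
  have h1 : IsUnit (A * B) := by
    refine key _ ?_
    rw [_root_.map_mul, hmapB, hB1]
  have h2 : IsUnit (B * A) := by
    refine key _ ?_
    rw [_root_.map_mul, hmapB, hB2]
  refine myIsUnit_of_two_sided (B := B * (Units.val h1.unit⁻¹))
    (C := (Units.val h2.unit⁻¹) * B) ?_ ?_
  · rw [← mul_assoc]
    exact h1.mul_val_inv
  · rw [mul_assoc]
    exact h2.val_inv_mul

end JacHelpers

section PtHelpers
variable {R : Type*} [Ring R]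

lemma admissible_fin_two_left {a b c d : R} (h : IsUnit !![a, b; c, d]) : Admissible a b :=
  ⟨!![a, b; c, d], h, by simp, by simp⟩

lemma admissible_fin_two_right {a b c d : R} (h : IsUnit !![a, b; c, d]) : Admissible c d := by
  refine ⟨!![c, d; a, b], ?_, by simp, by simp⟩
  have hs : !![(0 : R), 1; 1, 0] * !![a, b; c, d] = !![c, d; a, b] := by
    rw [Matrix.mul_fin_two]
    congr 1 <;> simp
  rw [← hs]
  exact (myIsUnit_mul_left isUnit_swap _).mpr h

lemma exists_right_inv {a b : R} (h : Admissible a b) : ∃ x y, a * x + b * y = 1 := by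
  obtain ⟨M, hM, h0, h1⟩ := h
  obtain ⟨u, hu⟩ := hM
  set N : Matrix (Fin 2) (Fin 2) R := Units.val u⁻¹ with hN
  have h1' : M * N = 1 := by rw [← hu]; exact u.mul_inv
  refine ⟨N 0 0, N 1 0, ?_⟩
  have h2 := congrFun (congrFun h1' 0) 0
  rw [Matrix.mul_apply, Fin.sum_univ_two, h0, h1] at h2
  simpa [Matrix.one_apply] using h2

lemma rep_unit {a b a' b' : R} (h : Admissible a b) (h' : Admissible a' b')
    (hpt : pt R a b = pt R a' b') : ∃ u : Rˣ, a' = ↑u * a ∧ b' = ↑u * b := by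
  have m1 : ![a', b'] ∈ pt R a b := by
    rw [hpt]; exact Submodule.mem_span_singleton_self _
  have m2 : ![a, b] ∈ pt R a' b' := by
    rw [← hpt]; exact Submodule.mem_span_singleton_self _
  obtain ⟨s, hs⟩ := Submodule.mem_span_singleton.mp m1
  obtain ⟨t, ht⟩ := Submodule.mem_span_singleton.mp m2
  have hs0 : s * a = a' := by have := congrFun hs 0; simpa using this
  have hs1 : s * b = b' := by have := congrFun hs 1; simpa using this
  have ht0 : t * a' = a := by have := congrFun ht 0; simpa using this
  have ht1 : t * b' = b := by have := congrFun ht 1; simpa using this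
  obtain ⟨x, y, hxy⟩ := exists_right_inv h
  obtain ⟨x', y', hxy'⟩ := exists_right_inv h'
  have hts : t * s = 1 := by
    calc t * s = t * s * (a * x + b * y) := by rw [hxy, mul_one]
    _ = (t * (s * a)) * x + (t * (s * b)) * y := by noncomm_ring
    _ = a * x + b * y := by rw [hs0, hs1, ht0, ht1]
    _ = 1 := hxy
  have hst : s * t = 1 := by
    calc s * t = s * t * (a' * x' + b' * y') := by rw [hxy', mul_one]
    _ = (s * (t * a')) * x' + (s * (t * b')) * y' := by noncomm_ring
    _ = a' * x' + b' * y' := by rw [ht0, ht1, hs0, hs1]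
    _ = 1 := hxy'
  exact ⟨⟨s, t, hst, hts⟩, hs0.symm, hs1.symm⟩

lemma pt_unit_mul (u : Rˣ) (a b : R) : pt R (↑u * a) (↑u * b) = pt R a b := by
  have h1 : (u : R) • ![a, b] = ![(↑u * a : R), ↑u * b] := by
    funext i; fin_cases i <;> simp
  have h2 : ((u⁻¹ : Rˣ) : R) • ![(↑u * a : R), ↑u * b] = ![a, b] := by
    funext i; fin_cases i <;> simp [← mul_assoc]
  unfold pt
  apply le_antisymm <;> rw [Submodule.span_le, Set.singleton_subset_iff, SetLike.mem_coe]
  · exact Submodule.mem_span_singleton.mpr ⟨(u : R), h1⟩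
  · exact Submodule.mem_span_singleton.mpr ⟨((u⁻¹ : Rˣ) : R), h2⟩

lemma distant_iff {a b c d : R} (hab : Admissible a b) (hcd : Admissible c d) :
    Distant (pt R a b) (pt R c d) ↔ IsUnit !![a, b; c, d] := by
  constructor
  · rintro ⟨a', b', c', d', h1, h2, hU⟩
    obtain ⟨u, hu1, hu2⟩ := rep_unit hab (admissible_fin_two_left hU) h1
    obtain ⟨v, hv1, hv2⟩ := rep_unit hcd (admissible_fin_two_right hU) h2
    have key : !![a', b'; c', d'] = !![(↑u : R), 0; 0, ↑v] * !![a, b; c, d] := by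
      rw [Matrix.mul_fin_two, hu1, hu2, hv1, hv2]
      congr 1 <;> simp
    rw [key] at hU
    exact (myIsUnit_mul_left (isUnit_lower u.isUnit v.isUnit 0) _).mp hU
  · intro h
    exact ⟨a, b, c, d, rfl, rfl, h⟩

lemma admissible_map {a b : R} (h : Admissible a b) :
    Admissible (radQuotMk R a) (radQuotMk R b) := by
  obtain ⟨M, hM, h0, h1⟩ := h
  refine ⟨(radQuotMk R).mapMatrix M, hM.map _, ?_, ?_⟩ <;>
    simp [RingHom.mapMatrix_apply, Matrix.map_apply, h0, h1]

end PtHelpers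

/-- Theorem 2: two points `p = R(a,b)` and `q = R(c,d)` of the projective line over `R`
are radically parallel iff their images under the canonical map
`P(R) → P(R/rad R)`, `R(a,b) ↦ (R/rad R)(ā, b̄)`, coincide. -/
theorem radParallel_iff_radQuot_eq (R : Type*) [Ring R] [Nontrivial R]
    (a b c d : R) (hab : Admissible a b) (hcd : Admissible c d) :
    RadParallel (pt R a b) (pt R c d) ↔
      pt (RadQuot R) (radQuotMk R a) (radQuotMk R b) =
        pt (RadQuot R) (radQuotMk R c) (radQuotMk R d) := by
  constructor
  · -- forward direction
    intro hpar
    obtain ⟨M, hM, h0, h1⟩ := id hab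
    set a₂ : R := M 1 0 with ha₂
    set b₂ : R := M 1 1 with hb₂
    have hM' : IsUnit !![a, b; a₂, b₂] := by
      rw [ha₂, hb₂, ← h0, ← h1, ← Matrix.eta_fin_two M]
      exact hM
    have stepA : ∀ t : R, IsUnit !![t * a + a₂, t * b + b₂; c, d] := by
      intro t
      have hE : IsUnit !![t, (1 : R); 1, 0] := by
        refine matUnit_of_inv (B := !![(0 : R), 1; 1, -t]) ?_ ?_ <;>
        · rw [Matrix.mul_fin_two, Matrix.one_fin_two]
          congr 1 <;> simp
      have hfacK : !![t, (1 : R); 1, 0] * !![a, b; a₂, b₂] = !![t * a + a₂, t * b + b₂; a, b] := by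
        rw [Matrix.mul_fin_two]
        simp
      have hK : IsUnit !![t * a + a₂, t * b + b₂; a, b] := by
        rw [← hfacK]
        exact (myIsUnit_mul_left hE _).mpr hM'
      have hadm := admissible_fin_two_left hK
      have hdist : Distant (pt R (t * a + a₂) (t * b + b₂)) (pt R a b) :=
        (distant_iff hadm hab).mpr hK
      have hmem : pt R (t * a + a₂) (t * b + b₂) ∈ ProjLine R := ⟨_, _, hadm, rfl⟩
      exact (distant_iff hadm hcd).mp (hpar _ hmem hdist)
    set φ := radQuotMk R with hφdef
    have hMq : IsUnit !![φ a, φ b; φ a₂, φ b₂] := by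
      rw [← mapMatrix_fin_two]
      exact hM'.map _
    obtain ⟨W, hW1, hW2⟩ := isUnit_iff_exists.mp hMq
    set α : RadQuot R := φ c * W 0 0 + φ d * W 1 0 with hαdef
    set β : RadQuot R := φ c * W 0 1 + φ d * W 1 1 with hβdef
    have hCW : !![α, β; 0, 0] = !![φ c, φ d; 0, 0] * W := by
      rw [Matrix.eta_fin_two W, Matrix.mul_fin_two, hαdef, hβdef]
      simp
    have hfacC : !![α, β; 0, 0] * !![φ a, φ b; φ a₂, φ b₂] = !![φ c, φ d; 0, 0] := by
      rw [hCW, mul_assoc, hW2, mul_one]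
    rw [Matrix.mul_fin_two] at hfacC
    have hc' : α * φ a + β * φ a₂ = φ c := by
      have := congrFun (congrFun hfacC 0) 0
      simpa using this
    have hd' : α * φ b + β * φ b₂ = φ d := by
      have := congrFun (congrFun hfacC 0) 1
      simpa using this
    have stepB : ∀ s : RadQuot R, IsUnit !![s, (1 : RadQuot R); α, β] := by
      intro s
      obtain ⟨t, rfl⟩ := radQuotMk_surjective (R := R) s
      have hUS : IsUnit !![φ (t * a + a₂), φ (t * b + b₂); φ c, φ d] := by
        rw [← mapMatrix_fin_two]
        exact (stepA t).map _
      have hfac : !![φ t, (1 : RadQuot R); α, β] * !![φ a, φ b; φ a₂, φ b₂]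
          = !![φ (t * a + a₂), φ (t * b + b₂); φ c, φ d] := by
        rw [Matrix.mul_fin_two, hc', hd', one_mul, one_mul]
        simp [map_add, _root_.map_mul]
      rw [← hfac] at hUS
      exact (myIsUnit_mul_right hMq _).mp hUS
    have hαu : IsUnit α := by
      have h0' := stepB 0
      have hsw : !![(0 : RadQuot R), 1; 1, 0] * !![(0 : RadQuot R), 1; α, β]
          = !![α, β; (0 : RadQuot R), 1] := by
        rw [Matrix.mul_fin_two]
        simp
      have : IsUnit !![α, β; (0 : RadQuot R), 1] := by
        rw [← hsw]
        exact (myIsUnit_mul_left isUnit_swap _).mpr h0'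
      exact isUnit_of_isUnit_lower_one this
    set z : RadQuot R := Units.val hαu.unit⁻¹ with hzdef
    have hzα : z * α = 1 := hαu.val_inv_mul
    have hαz : α * z = 1 := hαu.mul_val_inv
    have stepC : ∀ s : RadQuot R, IsUnit (1 + s * (z * β)) := by
      intro s
      have hB := stepB (-s)
      have f1 : !![(1 : RadQuot R), 0; 0, z] * !![-s, (1 : RadQuot R); α, β]
          = !![-s, 1; 1, z * β] := by
        rw [Matrix.mul_fin_two, hzα]
        simp
      have u1 : IsUnit !![-s, (1 : RadQuot R); 1, z * β] := by
        rw [← f1]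
        exact (myIsUnit_mul_left (isUnit_lower isUnit_one hαu.unit⁻¹.isUnit 0) _).mpr hB
      have f2 : !![(1 : RadQuot R), s; 0, 1] * !![-s, (1 : RadQuot R); 1, z * β]
          = !![0, 1 + s * (z * β); 1, z * β] := by
        rw [Matrix.mul_fin_two]
        simp
      have u2 : IsUnit !![(0 : RadQuot R), 1 + s * (z * β); 1, z * β] := by
        rw [← f2]
        exact (myIsUnit_mul_left (isUnit_upper isUnit_one isUnit_one s) _).mpr u1
      have f3 : !![(0 : RadQuot R), 1; 1, 0] * !![(0 : RadQuot R), 1 + s * (z * β); 1, z * β]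
          = !![1, z * β; 0, 1 + s * (z * β)] := by
        rw [Matrix.mul_fin_two]
        simp
      have u3 : IsUnit !![(1 : RadQuot R), z * β; 0, 1 + s * (z * β)] := by
        rw [← f3]
        exact (myIsUnit_mul_left isUnit_swap _).mpr u2
      exact isUnit_of_isUnit_upper_one u3
    obtain ⟨x₀, hx₀⟩ := radQuotMk_surjective (R := R) (z * β)
    have hx₀J : x₀ ∈ TwoSidedIdeal.jacobson (⊥ : TwoSidedIdeal R) := by
      apply mem_jac_of_forall_isUnit
      intro y
      apply isUnit_of_radQuotMk
      have hmap : radQuotMk R (1 + y * x₀) = 1 + (radQuotMk R y) * (z * β) := by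
        rw [map_add, _root_.map_one, _root_.map_mul, hx₀]
      rw [hmap]
      exact stepC _
    have hzβ : z * β = 0 := by
      rw [← hx₀]
      exact radQuotMk_eq_zero.mpr hx₀J
    have hβ0 : β = 0 := by
      calc β = (α * z) * β := by rw [hαz, one_mul]
      _ = α * (z * β) := by rw [mul_assoc]
      _ = 0 := by rw [hzβ, mul_zero]
    rw [hβ0, zero_mul, add_zero] at hc' hd'
    rw [← hc', ← hd']
    have hαspec : α = ↑hαu.unit := hαu.unit_spec.symm
    rw [hαspec]
    exact (pt_unit_mul hαu.unit (φ a) (φ b)).symm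
  · -- backward direction
    intro hq x hx hdist
    obtain ⟨e, f, hef, rfl⟩ := hx
    obtain ⟨w, hw1, hw2⟩ := rep_unit (admissible_map hab) (admissible_map hcd) hq
    have hU : IsUnit !![e, f; a, b] := (distant_iff hef hab).mp hdist
    refine (distant_iff hef hcd).mpr ?_
    apply isUnit_matrix_of_map
    rw [mapMatrix_fin_two]
    set φ := radQuotMk R with hφdef
    have hfac : !![(1 : RadQuot R), 0; 0, ↑w] * !![φ e, φ f; φ a, φ b]
        = !![φ e, φ f; φ c, φ d] := by
      rw [Matrix.mul_fin_two]
      rw [hw1, hw2]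
      simp
    rw [← hfac]
    refine (myIsUnit_mul_left (isUnit_lower isUnit_one w.isUnit 0) _).mpr ?_
    rw [← mapMatrix_fin_two]
    exact hU.map _
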